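/- Let u* = √N (γ − 0.5·1)/‖2γ − 1‖₂ + 0.5·1 for γ ∈ [0,1]^N with γ ≠ 0.5·1. Then ‖2u* − 1‖₂² = N, and (2γ − 1)ᵀ(2u* − 1) = N if and only if γ ∈ {0,1}^N. -/

import Mathlib

theorem stmt_18 (N : ℕ) (γ : Fin N → ℝ)
    (hγbox : ∀ i, 0 ≤ γ i ∧ γ i ≤ 1)
    (hγne : γ ≠ fun _ => (1/2 : ℝ))
    (ustar : Fin N → ℝ)
    (hustar : ustar = fun i =>
      Real.sqrt (N : ℝ) * (γ i - 1/2) / Real.sqrt (∑ j, (2 * γ j - 1) ^ 2) + 1/2) :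
    ∑ i, (2 * ustar i - 1) ^ 2 = (N : ℝ) ∧
    ((∑ i, (2 * γ i - 1) * (2 * ustar i - 1)) = (N : ℝ) ↔ ∀ i, γ i = 0 ∨ γ i = 1) := by
  set S : ℝ := ∑ j, (2 * γ j - 1) ^ 2 with hS
  -- there is an index with γ i ≠ 1/2
  obtain ⟨i0, hi0⟩ : ∃ i, γ i ≠ (1/2 : ℝ) := by
    by_contra h
    push_neg at h
    exact hγne (funext h)
  have hN0 : 0 < N := i0.pos
  have hNR : (0 : ℝ) < (N : ℝ) := by exact_mod_cast hN0
  have hSpos : 0 < S := by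
    apply Finset.sum_pos'
    · intro j _; positivity
    · refine ⟨i0, Finset.mem_univ _, ?_⟩
      have : 2 * γ i0 - 1 ≠ 0 := by
        intro h; apply hi0; linarith
      positivity
  have hsq : Real.sqrt S ^ 2 = S := Real.sq_sqrt hSpos.le
  have hsqpos : 0 < Real.sqrt S := Real.sqrt_pos.mpr hSpos
  have hNsq : Real.sqrt (N : ℝ) ^ 2 = (N : ℝ) := Real.sq_sqrt hNR.le
  have hterm : ∀ i, 2 * ustar i - 1 = Real.sqrt (N : ℝ) * (2 * γ i - 1) / Real.sqrt S := by
    intro i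
    rw [hustar]
    field_simp
    ring
  have hSle : S ≤ (N : ℝ) := by
    calc S ≤ ∑ _j : Fin N, (1 : ℝ) := by
            apply Finset.sum_le_sum
            intro j _
            have h1 := (hγbox j).1
            have h2 := (hγbox j).2
            nlinarith
      _ = (N : ℝ) := by simp
  have hfirst : ∑ i, (2 * ustar i - 1) ^ 2 = (N : ℝ) := by
    have : ∑ i, (2 * ustar i - 1) ^ 2
        = ∑ i, (N : ℝ) / S * (2 * γ i - 1) ^ 2 := by
      apply Finset.sum_congr rfl
      intro i _
      rw [hterm i]
      rw [div_pow, mul_pow, hsq, hNsq]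
      ring
    rw [this, ← Finset.mul_sum, ← hS]
    field_simp
  refine ⟨hfirst, ?_⟩
  have hsecond : ∑ i, (2 * γ i - 1) * (2 * ustar i - 1)
      = Real.sqrt (N : ℝ) * Real.sqrt S := by
    have : ∑ i, (2 * γ i - 1) * (2 * ustar i - 1)
        = (Real.sqrt (N : ℝ) / Real.sqrt S) * ∑ i, (2 * γ i - 1) ^ 2 := by
      rw [Finset.mul_sum]
      apply Finset.sum_congr rfl
      intro i _
      rw [hterm i]; ring
    rw [this, ← hS]
    field_simp
    rw [hsq]
  rw [hsecond]
  constructor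
  · intro h
    have hSN : S = (N : ℝ) := by
      have := congrArg (· ^ 2) h
      simp only [mul_pow, hsq, hNsq] at this
      nlinarith
    have hall : ∀ j ∈ Finset.univ, (2 * γ j - 1) ^ 2 = (1 : ℝ) := by
      rw [← Finset.sum_eq_sum_iff_of_le (by
        intro j _
        have h1 := (hγbox j).1
        have h2 := (hγbox j).2
        nlinarith)]
      rw [← hS, hSN]; simp
    intro i
    have := hall i (Finset.mem_univ i)
    have : γ i * (γ i - 1) = 0 := by nlinarith
    rcases mul_eq_zero.mp this with h | h
    · left; exact h
    · right; linarith
  · intro h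
    have hSN : S = (N : ℝ) := by
      rw [hS]
      calc ∑ j, (2 * γ j - 1) ^ 2 = ∑ _j : Fin N, (1 : ℝ) := by
            apply Finset.sum_congr rfl
            intro j _
            rcases h j with h | h <;> rw [h] <;> norm_num
        _ = (N : ℝ) := by simp
    rw [hSN, ← Real.sqrt_mul hNR.le, Real.sqrt_mul_self hNR.le]
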